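/- Let f : ℚ → ℚ be an order-preserving map whose image is infinite. Then there exists a family (g_t)_{t ∈ ℝ} of order-preserving maps ℚ → ℚ such that each g_t is 𝒟-related to f and, for distinct s, t ∈ ℝ, the maps g_s and g_t are not ℒ-related. Consequently the 𝒟-class of f contains 2^ℵ0 many ℒ-classes. -/

import Mathlib

/-- f is ℒ-related to g in End(ℚ,≤). -/
def LRel (f g : ℚ → ℚ) : Prop :=
  ∃ u v : ℚ → ℚ, Monotone u ∧ Monotone v ∧ g = f ∘ u ∧ f = g ∘ v

/-- f is ℛ-related to g in End(ℚ,≤). -/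
def RRel (f g : ℚ → ℚ) : Prop :=
  ∃ u v : ℚ → ℚ, Monotone u ∧ Monotone v ∧ g = u ∘ f ∧ f = v ∘ g

/-- f is 𝒟-related to g in End(ℚ,≤). -/
def DRel (f g : ℚ → ℚ) : Prop :=
  ∃ h : ℚ → ℚ, Monotone h ∧ LRel f h ∧ RRel h g

namespace Stmt11Aux

noncomputable def sqz (a : ℕ → ℚ) (n : ℕ) (x : ℚ) : ℚ :=
  a (2*n) + (x - a (2*n)) * ((a (2*n+1) - a (2*n)) / (a (2*n+2) - a (2*n)))

noncomputable def unsqz (a : ℕ → ℚ) (n : ℕ) (y : ℚ) : ℚ :=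
  a (2*n) + (y - a (2*n)) / ((a (2*n+1) - a (2*n)) / (a (2*n+2) - a (2*n)))

open Classical in
noncomputable def blk (a : ℕ → ℚ) (v : ℕ → ℚ → ℚ) (x : ℚ) : ℚ :=
  if x < a 0 then x
  else if h : ∃ n, x < a (2*n+2) then v (Nat.find h) x
  else x

open Classical in
noncomputable def phi (a : ℕ → ℚ) (A : Set ℕ) : ℚ → ℚ :=
  blk a (fun n x => if n ∈ A then sqz a n x else x)

open Classical in
noncomputable def psi (a : ℕ → ℚ) (A : Set ℕ) : ℚ → ℚ :=
  blk a (fun n y => if n ∈ A then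
      (if y < a (2*n+1) then unsqz a n y else a (2*n+2)) else y)

section Basic

variable {a : ℕ → ℚ} {n : ℕ} {x y : ℚ}

lemma rpos (ha : StrictMono a) (n : ℕ) :
    0 < (a (2*n+1) - a (2*n)) / (a (2*n+2) - a (2*n)) :=
  div_pos (by have := ha (show 2*n < 2*n+1 by omega); linarith)
    (by have := ha (show 2*n < 2*n+2 by omega); linarith)

lemma sqz_mono (ha : StrictMono a) (h : x ≤ y) : sqz a n x ≤ sqz a n y := by
  have := rpos ha n
  unfold sqz; nlinarith

lemma lo_le_sqz (ha : StrictMono a) (h : a (2*n) ≤ x) : a (2*n) ≤ sqz a n x := by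
  have := rpos ha n
  unfold sqz; nlinarith

lemma sqz_lt_mid (ha : StrictMono a) (h : x < a (2*n+2)) : sqz a n x < a (2*n+1) := by
  have h2 : a (2*n) < a (2*n+2) := ha (by omega)
  have hr := rpos ha n
  have key : (a (2*n+2) - a (2*n)) * ((a (2*n+1) - a (2*n)) / (a (2*n+2) - a (2*n)))
      = a (2*n+1) - a (2*n) := by
    rw [mul_comm, div_mul_cancel₀ _ (by linarith : a (2*n+2) - a (2*n) ≠ 0)]
  have h3 := mul_lt_mul_of_pos_right (show x - a (2*n) < a (2*n+2) - a (2*n) by linarith) hr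
  rw [key] at h3
  unfold sqz; linarith

lemma unsqz_mono (ha : StrictMono a) (h : x ≤ y) : unsqz a n x ≤ unsqz a n y := by
  have hr := rpos ha n
  unfold unsqz
  gcongr

lemma lo_le_unsqz (ha : StrictMono a) (h : a (2*n) ≤ x) : a (2*n) ≤ unsqz a n x := by
  have hr := rpos ha n
  have : 0 ≤ (x - a (2*n)) / ((a (2*n+1) - a (2*n)) / (a (2*n+2) - a (2*n))) :=
    div_nonneg (by linarith) (le_of_lt hr)
  unfold unsqz; linarith

lemma unsqz_lt_hi (ha : StrictMono a) (h : x < a (2*n+1)) : unsqz a n x < a (2*n+2) := by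
  have h1 : a (2*n) < a (2*n+1) := ha (by omega)
  have h2 : a (2*n) < a (2*n+2) := ha (by omega)
  have hr := rpos ha n
  have key : (a (2*n+1) - a (2*n)) / ((a (2*n+1) - a (2*n)) / (a (2*n+2) - a (2*n)))
      = a (2*n+2) - a (2*n) := by
    rw [div_div_eq_mul_div, mul_comm, mul_div_assoc, div_self (by linarith : a (2*n+1) - a (2*n) ≠ 0), mul_one]
  have h3 : (x - a (2*n)) / ((a (2*n+1) - a (2*n)) / (a (2*n+2) - a (2*n)))
      < (a (2*n+1) - a (2*n)) / ((a (2*n+1) - a (2*n)) / (a (2*n+2) - a (2*n))) := by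
    gcongr
  rw [key] at h3
  unfold unsqz; linarith

lemma unsqz_sqz (ha : StrictMono a) (x : ℚ) : unsqz a n (sqz a n x) = x := by
  have hr : (a (2*n+1) - a (2*n)) / (a (2*n+2) - a (2*n)) ≠ 0 := ne_of_gt (rpos ha n)
  unfold unsqz sqz
  rw [add_sub_cancel_left, mul_div_cancel_right₀ _ hr]
  ring

end Basic

section Blk

variable {a : ℕ → ℚ} {v : ℕ → ℚ → ℚ} {x y : ℚ}

lemma find_lb (hx : ¬ x < a 0) (h : ∃ n, x < a (2*n+2)) :
    a (2 * Nat.find h) ≤ x := by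
  rcases Nat.eq_zero_or_pos (Nat.find h) with h0 | hpos
  · rw [h0]; simpa using not_lt.mp hx
  · have h1 := Nat.find_min h (show Nat.find h - 1 < Nat.find h by omega)
    push_neg at h1
    have e : 2 * (Nat.find h - 1) + 2 = 2 * Nat.find h := by omega
    rwa [e] at h1

lemma find_eq (ha : StrictMono a) {z : ℚ} (h : ∃ n, z < a (2*n+2)) {n : ℕ}
    (h1 : a (2*n) ≤ z) (h2 : z < a (2*n+2)) : Nat.find h = n := by
  refine le_antisymm (Nat.find_min' h h2) ?_
  rw [Nat.le_find_iff]
  intro m hm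
  have hmn : a (2*m+2) ≤ a (2*n) := ha.monotone (by omega)
  exact not_lt.mpr (hmn.trans h1)

lemma blk_mono (ha : StrictMono a)
    (hmono : ∀ n x y, a (2*n) ≤ x → x ≤ y → y < a (2*n+2) → v n x ≤ v n y)
    (hlb : ∀ n x, a (2*n) ≤ x → x < a (2*n+2) → a (2*n) ≤ v n x)
    (hub : ∀ n x, a (2*n) ≤ x → x < a (2*n+2) → v n x ≤ a (2*n+2)) :
    Monotone (blk a v) := by
  intro x y hxy
  unfold blk
  by_cases hx0 : x < a 0
  · by_cases hy0 : y < a 0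
    · simpa [hx0, hy0] using hxy
    · rw [if_pos hx0, if_neg hy0]
      split_ifs with hy
      · refine le_trans (le_of_lt hx0) (le_trans (ha.monotone (Nat.zero_le _))
          (hlb _ _ (find_lb hy0 hy) (Nat.find_spec hy)))
      · exact le_trans (le_of_lt hx0) (not_lt.mp hy0)
  · have hy0 : ¬ y < a 0 := fun h => hx0 (lt_of_le_of_lt hxy h)
    rw [if_neg hx0, if_neg hy0]
    by_cases hy : ∃ n, y < a (2*n+2)
    · have hx : ∃ n, x < a (2*n+2) := ⟨Nat.find hy, lt_of_le_of_lt hxy (Nat.find_spec hy)⟩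
      rw [dif_pos hx, dif_pos hy]
      have hnm : Nat.find hx ≤ Nat.find hy :=
        Nat.find_min' hx (lt_of_le_of_lt hxy (Nat.find_spec hy))
      rcases eq_or_lt_of_le hnm with he | hlt
      · have hlbx := find_lb hx0 hx
        rw [he] at hlbx ⊢
        exact hmono _ x y hlbx hxy (Nat.find_spec hy)
      · calc v (Nat.find hx) x ≤ a (2*Nat.find hx + 2) :=
              hub _ _ (find_lb hx0 hx) (Nat.find_spec hx)
          _ ≤ a (2*Nat.find hy) := ha.monotone (by omega)
          _ ≤ v (Nat.find hy) y := hlb _ _ (find_lb hy0 hy) (Nat.find_spec hy)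
    · by_cases hx : ∃ n, x < a (2*n+2)
      · rw [dif_pos hx, dif_neg hy]
        push_neg at hy
        calc v (Nat.find hx) x ≤ a (2*Nat.find hx+2) :=
              hub _ _ (find_lb hx0 hx) (Nat.find_spec hx)
          _ ≤ y := hy _
      · rw [dif_neg hx, dif_neg hy]; exact hxy

end Blk

section Phi

variable {a : ℕ → ℚ} {A : Set ℕ} {n : ℕ} {x : ℚ}

lemma phi_mono (ha : StrictMono a) (A : Set ℕ) : Monotone (phi a A) := by
  classical
  refine blk_mono ha ?_ ?_ ?_
  · intro n x y h1 h2 h3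
    split_ifs with h
    · exact sqz_mono ha h2
    · exact h2
  · intro n x h1 h2
    split_ifs with h
    · exact lo_le_sqz ha h1
    · exact h1
  · intro n x h1 h2
    split_ifs with h
    · exact le_of_lt ((sqz_lt_mid ha h2).trans (ha (by omega)))
    · exact le_of_lt h2

lemma psi_mono (ha : StrictMono a) (A : Set ℕ) : Monotone (psi a A) := by
  classical
  refine blk_mono ha ?_ ?_ ?_
  · intro n x y h1 h2 h3
    split_ifs with hA hx' hy' hy2
    · exact unsqz_mono ha h2
    · exact le_of_lt (unsqz_lt_hi ha hx')
    · exact absurd (lt_of_le_of_lt h2 hy2) hx'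
    · exact le_refl _
    · exact h2
  · intro n x h1 h2
    split_ifs with hA hx'
    · exact lo_le_unsqz ha h1
    · exact ha.monotone (by omega)
    · exact h1
  · intro n x h1 h2
    split_ifs with hA hx'
    · exact le_of_lt (unsqz_lt_hi ha hx')
    · exact le_refl _
    · exact le_of_lt h2

lemma psi_phi (ha : StrictMono a) (A : Set ℕ) (x : ℚ) : psi a A (phi a A x) = x := by
  classical
  unfold phi psi blk
  by_cases hx0 : x < a 0
  · simp only [if_pos hx0]
  · simp only [if_neg hx0]
    by_cases hx : ∃ n, x < a (2*n+2)
    · simp only [dif_pos hx]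
      have hlo : a (2 * Nat.find hx) ≤ x := find_lb hx0 hx
      have hhi : x < a (2 * Nat.find hx + 2) := Nat.find_spec hx
      by_cases hA : Nat.find hx ∈ A
      · simp only [if_pos hA]
        have h1 : a (2 * Nat.find hx) ≤ sqz a (Nat.find hx) x := lo_le_sqz ha hlo
        have h2 : sqz a (Nat.find hx) x < a (2 * Nat.find hx + 1) := sqz_lt_mid ha hhi
        have h2' : sqz a (Nat.find hx) x < a (2 * Nat.find hx + 2) := h2.trans (ha (by omega))
        have h0' : ¬ sqz a (Nat.find hx) x < a 0 :=
          not_lt.mpr (le_trans (ha.monotone (Nat.zero_le _)) h1)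
        have hex : ∃ m, sqz a (Nat.find hx) x < a (2*m+2) := ⟨Nat.find hx, h2'⟩
        simp only [if_neg h0', dif_pos hex, find_eq ha hex h1 h2', if_pos hA, if_pos h2]
        exact unsqz_sqz ha x
      · simp only [if_neg hA, if_neg hx0, dif_pos hx]
    · simp only [dif_neg hx, if_neg hx0]

lemma phi_fix (ha : StrictMono a) (hA : n ∉ A) :
    phi a A (a (2*n+1)) = a (2*n+1) := by
  classical
  unfold phi blk
  have h0 : ¬ a (2*n+1) < a 0 := not_lt.mpr (ha.monotone (by omega))
  have hex : ∃ m, a (2*n+1) < a (2*m+2) := ⟨n, ha (by omega)⟩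
  simp only [if_neg h0, dif_pos hex,
    find_eq ha hex (n := n) (ha.monotone (by omega)) (ha (by omega)), if_neg hA]

lemma phi_avoid (ha : StrictMono a) (hA : n ∈ A) (x : ℚ) :
    phi a A x ∉ Set.Ico (a (2*n+1)) (a (2*n+2)) := by
  classical
  have key : phi a A x < a (2*n+1) ∨ a (2*n+2) ≤ phi a A x := by
    unfold phi blk
    by_cases hx0 : x < a 0
    · left; rw [if_pos hx0]; exact hx0.trans_le (ha.monotone (by omega))
    · by_cases hx : ∃ m, x < a (2*m+2)
      · simp only [if_neg hx0, dif_pos hx]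
        have hlo : a (2 * Nat.find hx) ≤ x := find_lb hx0 hx
        have hhi : x < a (2 * Nat.find hx + 2) := Nat.find_spec hx
        rcases lt_trichotomy (Nat.find hx) n with hmn | heq | hnm
        · left
          have hb : (if Nat.find hx ∈ A then sqz a (Nat.find hx) x else x)
              < a (2 * Nat.find hx + 2) := by
            split_ifs with h
            · exact (sqz_lt_mid ha hhi).trans (ha (by omega))
            · exact hhi
          exact hb.trans_le (ha.monotone (by omega))
        · left
          rw [heq] at hhi
          simp only [heq, if_pos hA]
          exact sqz_lt_mid ha hhi
        · right
          have hb : a (2 * Nat.find hx) ≤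
              (if Nat.find hx ∈ A then sqz a (Nat.find hx) x else x) := by
            split_ifs with h
            · exact lo_le_sqz ha hlo
            · exact hlo
          exact le_trans (ha.monotone (by omega)) hb
      · right
        simp only [if_neg hx0, dif_neg hx]
        push_neg at hx
        exact hx n
  intro hmem
  rcases key with h | h
  · exact absurd hmem.1 (not_le.mpr h)
  · exact absurd hmem.2 (not_lt.mpr h)

end Phi

lemma lrel_range_eq {g h : ℚ → ℚ} (H : LRel g h) : Set.range g = Set.range h := by
  obtain ⟨u, v, hu, hv, h1, h2⟩ := H
  apply Set.Subset.antisymm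
  · rw [h2]; exact Set.range_comp_subset_range v h
  · rw [h1]; exact Set.range_comp_subset_range u g

lemma main (f : ℚ → ℚ) (hf : Monotone f) (a : ℕ → ℚ) (ha : StrictMono a)
    (hmem : ∀ n, a n ∈ Set.range f) :
    ∃ g : ℝ → (ℚ → ℚ),
      (∀ t : ℝ, Monotone (g t)) ∧
      (∀ t : ℝ, DRel (g t) f) ∧
      (∀ s t : ℝ, s ≠ t → ¬ LRel (g s) (g t)) := by
  classical
  set e : ℕ ≃ ℚ := (Denumerable.eqv ℚ).symm with he
  set E : ℝ → Set ℕ := fun t => {n | ((e n : ℚ) : ℝ) < t} with hE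
  have key : ∀ (s t : ℝ) (n : ℕ), n ∉ E s → n ∈ E t →
      ¬ Set.range (phi a (E s) ∘ f) = Set.range (phi a (E t) ∘ f) := by
    intro s t n hns hnt hr
    obtain ⟨x, hxfx⟩ := hmem (2*n+1)
    have h1 : a (2*n+1) ∈ Set.range (phi a (E s) ∘ f) :=
      ⟨x, by simp only [Function.comp_apply, hxfx, phi_fix ha hns]⟩
    rw [hr] at h1
    obtain ⟨y, hy⟩ := h1
    apply phi_avoid ha hnt (f y)
    rw [show phi a (E t) (f y) = a (2*n+1) from hy]
    exact ⟨le_refl _, ha (by omega)⟩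
  refine ⟨fun t => phi a (E t) ∘ f, ?_, ?_, ?_⟩
  · intro t; exact (phi_mono ha _).comp hf
  · intro t
    refine ⟨phi a (E t) ∘ f, (phi_mono ha _).comp hf,
      ⟨id, id, monotone_id, monotone_id, rfl, rfl⟩,
      ⟨psi a (E t), phi a (E t), psi_mono ha _, phi_mono ha _, ?_, rfl⟩⟩
    funext x
    exact (psi_phi ha (E t) (f x)).symm
  · intro s t hst H
    have hr := lrel_range_eq H
    rcases lt_or_gt_of_ne hst with hlt | hlt
    · obtain ⟨q, hq1, hq2⟩ := exists_rat_btwn hlt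
      refine key s t (e.symm q) ?_ ?_ hr
      · show ¬ ((e (e.symm q) : ℚ) : ℝ) < s
        rw [Equiv.apply_symm_apply]
        exact not_lt.mpr (le_of_lt hq1)
      · show ((e (e.symm q) : ℚ) : ℝ) < t
        rw [Equiv.apply_symm_apply]
        exact hq2
    · obtain ⟨q, hq1, hq2⟩ := exists_rat_btwn hlt
      refine key t s (e.symm q) ?_ ?_ hr.symm
      · show ¬ ((e (e.symm q) : ℚ) : ℝ) < t
        rw [Equiv.apply_symm_apply]
        exact not_lt.mpr (le_of_lt hq1)
      · show ((e (e.symm q) : ℚ) : ℝ) < s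
        rw [Equiv.apply_symm_apply]
        exact hq2

def conj (F : ℚ → ℚ) : ℚ → ℚ := fun x => - F (-x)

lemma conj_conj (F : ℚ → ℚ) : conj (conj F) = F := funext fun x => by simp [conj]

lemma conj_mono {F : ℚ → ℚ} (h : Monotone F) : Monotone (conj F) :=
  fun _ _ hxy => neg_le_neg (h (neg_le_neg hxy))

lemma conj_comp (F G : ℚ → ℚ) : conj (F ∘ G) = conj F ∘ conj G :=
  funext fun x => by simp [conj, Function.comp]

lemma lrel_conj {F G : ℚ → ℚ} (h : LRel F G) : LRel (conj F) (conj G) := by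
  obtain ⟨u, v, hu, hv, h1, h2⟩ := h
  exact ⟨conj u, conj v, conj_mono hu, conj_mono hv,
    by rw [h1, conj_comp], by rw [h2, conj_comp]⟩

lemma rrel_conj {F G : ℚ → ℚ} (h : RRel F G) : RRel (conj F) (conj G) := by
  obtain ⟨u, v, hu, hv, h1, h2⟩ := h
  exact ⟨conj u, conj v, conj_mono hu, conj_mono hv,
    by rw [h1, conj_comp], by rw [h2, conj_comp]⟩

lemma drel_conj {F G : ℚ → ℚ} (h : DRel F G) : DRel (conj F) (conj G) := by
  obtain ⟨h0, hm, hl, hr⟩ := h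
  exact ⟨conj h0, conj_mono hm, lrel_conj hl, rrel_conj hr⟩

end Stmt11Aux

/-- if the image of a monotone `f : ℚ → ℚ` is infinite, then the
𝒟-class of `f` contains a real-indexed family of maps that are pairwise
non-ℒ-related; hence it contains continuum many ℒ-classes. -/
theorem stmt_11 (f : ℚ → ℚ) (hf : Monotone f)
    (hinf : (Set.range f).Infinite) :
    ∃ g : ℝ → (ℚ → ℚ),
      (∀ t : ℝ, Monotone (g t)) ∧
      (∀ t : ℝ, DRel (g t) f) ∧
      (∀ s t : ℝ, s ≠ t → ¬ LRel (g s) (g t)) := by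
  classical
  set emb := Set.Infinite.natEmbedding (Set.range f) hinf with hemb
  set u : ℕ → ℚ := fun n => (emb n : ℚ) with hu
  have hui : Function.Injective u := fun m n h =>
    emb.injective (Subtype.ext h)
  haveI : IsTrans ℚ (· < ·) := ⟨fun _ _ _ => lt_trans⟩
  obtain ⟨g0, hg0⟩ := exists_increasing_or_nonincreasing_subseq (· < ·) u
  rcases hg0 with hinc | hdec
  · exact Stmt11Aux.main f hf (fun n => u (g0 n)) (fun m n h => hinc m n h)
      (fun n => (emb (g0 n)).2)
  · have hdec' : StrictMono (fun n => - u (g0 n)) := by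
      intro m n h
      have h1 : ¬ u (g0 m) < u (g0 n) := hdec m n h
      have h2 : u (g0 n) ≠ u (g0 m) := by
        intro he
        exact absurd (g0.injective (hui he)) (ne_of_gt h)
      have h3 : u (g0 n) < u (g0 m) := lt_of_le_of_ne (not_lt.mp h1) h2
      simpa using neg_lt_neg h3
    have hmem' : ∀ n, - u (g0 n) ∈ Set.range (Stmt11Aux.conj f) := by
      intro n
      obtain ⟨x, hx⟩ := (emb (g0 n)).2
      exact ⟨-x, by simp [Stmt11Aux.conj, hx, hu]⟩
    obtain ⟨G, hG1, hG2, hG3⟩ :=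
      Stmt11Aux.main (Stmt11Aux.conj f) (Stmt11Aux.conj_mono hf)
        (fun n => - u (g0 n)) hdec' hmem'
    refine ⟨fun t => Stmt11Aux.conj (G t), fun t => Stmt11Aux.conj_mono (hG1 t),
      fun t => ?_, fun s t hst H => ?_⟩
    · have h := Stmt11Aux.drel_conj (hG2 t)
      rwa [Stmt11Aux.conj_conj] at h
    · have h := Stmt11Aux.lrel_conj H
      rw [Stmt11Aux.conj_conj, Stmt11Aux.conj_conj] at h
      exact hG3 s t hst h
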